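/- As β → ∞, the ratio (∫_{ℝ³∖B₁} |∇s_β|² dx) / (∫_{ℝ³∖B₁} s_β⁶ dx)^{1/3} equals Λ + (2^{8/3} π^{1/3}/3)·β^{−3} + O(β^{−4}), where Λ = 3(π/2)^{4/3}. -/

import Mathlib

open MeasureTheory Real Filter Asymptotics Set Topology


noncomputable abbrev EE := EuclideanSpace ℝ (Fin 3)

lemma grad_norm_sq (b : ℝ) (hb : 1 ≤ b) (x : EE) :
    ‖gradient (fun y : EE => Real.sqrt ((b ^ 2 + 1) / (b ^ 2 + ‖y‖ ^ 2))) x‖ ^ 2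
      = (b ^ 2 + 1) * ‖x‖ ^ 2 / (b ^ 2 + ‖x‖ ^ 2) ^ 3 := by
  have hb2 : (0:ℝ) < b ^ 2 := by nlinarith
  have hden : (0:ℝ) < b ^ 2 + ‖x‖ ^ 2 := by positivity
  have hz : (0:ℝ) < (b ^ 2 + 1) / (b ^ 2 + ‖x‖ ^ 2) := by positivity
  have h1 : HasFDerivAt (fun y : EE => b ^ 2 + ‖y‖ ^ 2) (2 • (innerSL ℝ x)) x := by
    simpa using ((hasStrictFDerivAt_norm_sq x).hasFDerivAt.const_add (b ^ 2))
  have h2 : HasFDerivAt (fun y : EE => (b ^ 2 + 1) / (b ^ 2 + ‖y‖ ^ 2))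
      ((-(b ^ 2 + 1) / (b ^ 2 + ‖x‖ ^ 2) ^ 2) • (2 • (innerSL ℝ x))) x := by
    have h := ((hasDerivAt_inv hden.ne').comp_hasFDerivAt x h1).const_mul (b ^ 2 + 1)
    simp only [div_eq_mul_inv]
    exact h.congr_fderiv (by module)
  have h3 : HasFDerivAt (fun y : EE => Real.sqrt ((b ^ 2 + 1) / (b ^ 2 + ‖y‖ ^ 2)))
      ((1 / (2 * Real.sqrt ((b ^ 2 + 1) / (b ^ 2 + ‖x‖ ^ 2)))) •
        ((-(b ^ 2 + 1) / (b ^ 2 + ‖x‖ ^ 2) ^ 2) • (2 • (innerSL ℝ x)))) x :=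
    (Real.hasDerivAt_sqrt hz.ne').comp_hasFDerivAt x h2
  have hg : ‖gradient (fun y : EE => Real.sqrt ((b ^ 2 + 1) / (b ^ 2 + ‖y‖ ^ 2))) x‖
      = ‖fderiv ℝ (fun y : EE => Real.sqrt ((b ^ 2 + 1) / (b ^ 2 + ‖y‖ ^ 2))) x‖ := by
    rw [gradient]
    exact (LinearIsometryEquiv.norm_map _ _)
  rw [hg, h3.fderiv]
  rw [norm_smul, norm_smul, ← Nat.cast_smul_eq_nsmul ℝ 2, norm_smul, innerSL_apply_norm]
  have hs : Real.sqrt ((b ^ 2 + 1) / (b ^ 2 + ‖x‖ ^ 2)) ^ 2 = (b ^ 2 + 1) / (b ^ 2 + ‖x‖ ^ 2) :=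
    Real.sq_sqrt hz.le
  have hsp : 0 < Real.sqrt ((b ^ 2 + 1) / (b ^ 2 + ‖x‖ ^ 2)) := Real.sqrt_pos.2 hz
  rw [Real.norm_eq_abs, Real.norm_eq_abs, show ‖((2:ℕ):ℝ)‖ = 2 by norm_num]
  rw [abs_of_pos (by positivity), abs_of_neg (by rw [neg_div]; exact neg_neg_iff_pos.2 (by positivity))]
  have e1 : Real.sqrt (b ^ 2 + ‖x‖ ^ 2) ^ 2 = b ^ 2 + ‖x‖ ^ 2 := Real.sq_sqrt hden.le
  have e2 : Real.sqrt (b ^ 2 + 1) ^ 2 = b ^ 2 + 1 := Real.sq_sqrt (by positivity)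
  field_simp
  rw [hs]
  field_simp


lemma ball_vol : (volume (Metric.ball (0:EE) 1)).toReal = 4 * π / 3 := by
  rw [EuclideanSpace.volume_ball]
  have h32 : Real.Gamma ((Fintype.card (Fin 3) : ℝ) / 2 + 1) = 3 / 4 * Real.sqrt π := by
    rw [Fintype.card_fin]
    push_cast
    have : (3:ℝ)/2 + 1 = (1/2 + 1) + 1 := by norm_num
    rw [this, Real.Gamma_add_one (by norm_num), Real.Gamma_add_one (by norm_num),
      Real.Gamma_one_half_eq]
    ring
  rw [h32]
  have hs : Real.sqrt π > 0 := Real.sqrt_pos.2 pi_pos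
  have h3 : Real.sqrt π ^ Fintype.card (Fin 3) = π * Real.sqrt π := by
    rw [Fintype.card_fin]
    rw [show (3:ℕ) = 2 + 1 from rfl, pow_succ, Real.sq_sqrt pi_pos.le]
  rw [h3]
  rw [ENNReal.toReal_mul, ENNReal.toReal_pow, ENNReal.toReal_ofReal (by norm_num),
    ENNReal.toReal_ofReal (by positivity), one_pow, one_mul]
  field_simp

lemma radial3 (F : EE → ℝ) (G : ℝ → ℝ) (hFG : ∀ x : EE, 1 ≤ ‖x‖ → F x = G ‖x‖) :
    ∫ x in {x : EE | 1 ≤ ‖x‖}, F x = 4 * π * ∫ r in Ici (1:ℝ), r ^ 2 * G r := by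
  have hmeas : MeasurableSet {x : EE | 1 ≤ ‖x‖} :=
    (isClosed_le continuous_const continuous_norm).measurableSet
  set g : ℝ → ℝ := fun r => if 1 ≤ r then G r else 0 with hg
  have step1 : ∫ x in {x : EE | 1 ≤ ‖x‖}, F x = ∫ x in {x : EE | 1 ≤ ‖x‖}, g ‖x‖ := by
    refine setIntegral_congr_fun hmeas (fun x hx => ?_)
    rw [hFG x hx]
    exact (if_pos hx).symm
  have step2 : ∫ x in {x : EE | 1 ≤ ‖x‖}, g ‖x‖ = ∫ x : EE, g ‖x‖ := by
    rw [← integral_indicator hmeas]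
    congr 1
    funext x
    by_cases hx : (1:ℝ) ≤ ‖x‖
    · rw [indicator_of_mem (by exact hx)]
    · rw [indicator_of_notMem (by exact hx)]
      simp [hg, hx]
  have step3 : ∫ x : EE, g ‖x‖
      = (Module.finrank ℝ EE) • (volume (Metric.ball (0:EE) 1)).toReal •
        ∫ y in Ioi (0:ℝ), y ^ (Module.finrank ℝ EE - 1) • g y :=
    integral_fun_norm_addHaar volume g
  have hfr : Module.finrank ℝ EE = 3 := finrank_euclideanSpace_fin
  have step4 : ∫ y in Ioi (0:ℝ), y ^ 2 • g y = ∫ r in Ici (1:ℝ), r ^ 2 * G r := by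
    have : ∀ y : ℝ, y ^ 2 • g y = Set.indicator (Ici (1:ℝ)) (fun r => r ^ 2 * G r) y := by
      intro y
      by_cases hy : (1:ℝ) ≤ y
      · rw [indicator_of_mem (by exact hy)]; simp [hg, hy]
      · rw [indicator_of_notMem (by exact hy)]; simp [hg, hy]
    simp_rw [this]
    rw [setIntegral_indicator measurableSet_Ici]
    congr 1
    rw [show Ioi (0:ℝ) ∩ Ici 1 = Ici 1 by
      ext y; simp only [mem_inter_iff, mem_Ici, mem_Ioi]
      constructor
      · exact fun h => h.2
      · exact fun h => ⟨by linarith, h⟩]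
  rw [step1, step2, step3, hfr, ball_vol]
  simp only [show (3:ℕ) - 1 = 2 from rfl]
  rw [step4]
  simp only [nsmul_eq_mul, smul_eq_mul]
  ring

lemma tend_aux (b : ℝ) (hb : 1 ≤ b) (n : ℕ) (hn : 1 ≤ n) :
    Tendsto (fun r : ℝ => r / (b ^ 2 + r ^ 2) ^ n) atTop (nhds 0) := by
  have h0 : Tendsto (fun r : ℝ => r⁻¹) atTop (nhds (0:ℝ)) := tendsto_inv_atTop_zero
  refine tendsto_of_tendsto_of_tendsto_of_le_of_le' tendsto_const_nhds h0 ?_ ?_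
  · filter_upwards [eventually_ge_atTop (1:ℝ)] with r hr
    positivity
  · filter_upwards [eventually_ge_atTop (1:ℝ)] with r hr
    rw [div_le_iff₀ (by positivity), ← div_le_iff₀' (by positivity)]
    calc r / r⁻¹ = r ^ 2 := by field_simp
    _ ≤ (b ^ 2 + r ^ 2) ^ 1 := by nlinarith
    _ ≤ (b ^ 2 + r ^ 2) ^ n := by
        apply pow_le_pow_right₀ (by nlinarith) hn

lemma tend_arctan (b : ℝ) (hb : 1 ≤ b) :
    Tendsto (fun r : ℝ => Real.arctan (r / b)) atTop (nhds (π / 2)) := by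
  apply tendsto_nhds_of_tendsto_nhdsWithin (s := Iio (π/2))
  exact Real.tendsto_arctan_atTop.comp (tendsto_id.atTop_div_const (by linarith))

lemma ftcA (b : ℝ) (hb : 1 ≤ b) :
    ∫ r in Ici (1:ℝ), r ^ 2 * ((b ^ 2 + 1) * r ^ 2 / (b ^ 2 + r ^ 2) ^ 3)
      = (b ^ 2 + 1) * ((3 / (8 * b)) * (π / 2))
        - (b ^ 2 + 1) * ((3 / (8 * b)) * Real.arctan (1 / b) - (5 / 8) * (1 / (b ^ 2 + 1 ^ 2))
            + (b ^ 2 / 4) * (1 / (b ^ 2 + 1 ^ 2) ^ 2)) := by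
  have hb0 : (0:ℝ) < b := by linarith
  have hd : ∀ r : ℝ, (0:ℝ) < b ^ 2 + r ^ 2 := fun r => by positivity
  set F₁ : ℝ → ℝ := fun s => (b ^ 2 + 1) * ((3 / (8 * b)) * Real.arctan (s / b)
      - (5 / 8) * (s / (b ^ 2 + s ^ 2)) + (b ^ 2 / 4) * (s / (b ^ 2 + s ^ 2) ^ 2)) with hF₁
  have key : ∀ r : ℝ, HasDerivAt F₁ (r ^ 2 * ((b ^ 2 + 1) * r ^ 2 / (b ^ 2 + r ^ 2) ^ 3)) r := by
    intro r
    have h1 : HasDerivAt (fun s : ℝ => Real.arctan (s / b)) (1 / (1 + (r / b) ^ 2) * (1 / b)) r := by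
      simpa [Function.comp_def] using (Real.hasDerivAt_arctan (r / b)).comp r ((hasDerivAt_id r).div_const b)
    have hden : HasDerivAt (fun s : ℝ => b ^ 2 + s ^ 2) (2 * r) r := by
      simpa using (hasDerivAt_pow 2 r).const_add (b ^ 2)
    have h2 : HasDerivAt (fun s : ℝ => s / (b ^ 2 + s ^ 2)) ((b ^ 2 - r ^ 2) / (b ^ 2 + r ^ 2) ^ 2) r := by
      have := (hasDerivAt_id r).div hden (hd r).ne'
      refine this.congr_deriv ?_
      simp only [id_eq]
      field_simp
      ring
    have h3 : HasDerivAt (fun s : ℝ => s / (b ^ 2 + s ^ 2) ^ 2)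
        ((b ^ 2 - 3 * r ^ 2) / (b ^ 2 + r ^ 2) ^ 3) r := by
      have hden2 : HasDerivAt (fun s : ℝ => (b ^ 2 + s ^ 2) ^ 2)
          (2 * (b ^ 2 + r ^ 2) ^ 1 * (2 * r)) r := hden.pow 2
      have := (hasDerivAt_id r).div hden2 (by positivity)
      refine this.congr_deriv ?_
      simp only [id_eq]
      field_simp
      ring
    have H := (((h1.const_mul ((3:ℝ) / (8 * b))).sub (h2.const_mul ((5:ℝ) / 8))).add
        (h3.const_mul (b ^ 2 / 4))).const_mul (b ^ 2 + 1)
    refine H.congr_deriv ?_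
    have h1r : 1 + (r / b) ^ 2 > 0 := by positivity
    field_simp
    ring
  have hT : Tendsto F₁ atTop
      (nhds ((b ^ 2 + 1) * ((3 / (8 * b)) * (π / 2) - (5/8) * 0 + (b ^ 2 / 4) * 0))) := by
    apply Tendsto.const_mul
    simpa using (((tend_arctan b hb).const_mul ((3:ℝ)/(8*b))).sub
        ((tend_aux b hb 1 le_rfl).const_mul ((5:ℝ)/8))).add
      (((tend_aux b hb 2 one_le_two).const_mul (b ^ 2 / 4)))
  rw [integral_Ici_eq_integral_Ioi,
    integral_Ioi_of_hasDerivAt_of_nonneg' (fun r _ => key r) (fun r _ => by positivity) hT, hF₁]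
  norm_num

lemma ftcB (b : ℝ) (hb : 1 ≤ b) :
    ∫ r in Ici (1:ℝ), r ^ 2 * (((b ^ 2 + 1) / (b ^ 2 + r ^ 2)) ^ 3)
      = (b ^ 2 + 1) ^ 3 * ((1 / (8 * b ^ 3)) * (π / 2))
        - (b ^ 2 + 1) ^ 3 * ((1 / (8 * b ^ 3)) * Real.arctan (1 / b)
            + (1 / (8 * b ^ 2)) * (1 / (b ^ 2 + 1 ^ 2)) - (1 / 4) * (1 / (b ^ 2 + 1 ^ 2) ^ 2)) := by
  have hb0 : (0:ℝ) < b := by linarith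
  have hd : ∀ r : ℝ, (0:ℝ) < b ^ 2 + r ^ 2 := fun r => by positivity
  set F₂ : ℝ → ℝ := fun s => (b ^ 2 + 1) ^ 3 * ((1 / (8 * b ^ 3)) * Real.arctan (s / b)
      + (1 / (8 * b ^ 2)) * (s / (b ^ 2 + s ^ 2)) - (1 / 4) * (s / (b ^ 2 + s ^ 2) ^ 2)) with hF₂
  have key : ∀ r : ℝ, HasDerivAt F₂ (r ^ 2 * (((b ^ 2 + 1) / (b ^ 2 + r ^ 2)) ^ 3)) r := by
    intro r
    have h1 : HasDerivAt (fun s : ℝ => Real.arctan (s / b)) (1 / (1 + (r / b) ^ 2) * (1 / b)) r := by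
      simpa [Function.comp_def] using (Real.hasDerivAt_arctan (r / b)).comp r ((hasDerivAt_id r).div_const b)
    have hden : HasDerivAt (fun s : ℝ => b ^ 2 + s ^ 2) (2 * r) r := by
      simpa using (hasDerivAt_pow 2 r).const_add (b ^ 2)
    have h2 : HasDerivAt (fun s : ℝ => s / (b ^ 2 + s ^ 2)) ((b ^ 2 - r ^ 2) / (b ^ 2 + r ^ 2) ^ 2) r := by
      have := (hasDerivAt_id r).div hden (hd r).ne'
      refine this.congr_deriv ?_
      simp only [id_eq]
      field_simp
      ring
    have h3 : HasDerivAt (fun s : ℝ => s / (b ^ 2 + s ^ 2) ^ 2)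
        ((b ^ 2 - 3 * r ^ 2) / (b ^ 2 + r ^ 2) ^ 3) r := by
      have hden2 : HasDerivAt (fun s : ℝ => (b ^ 2 + s ^ 2) ^ 2)
          (2 * (b ^ 2 + r ^ 2) ^ 1 * (2 * r)) r := hden.pow 2
      have := (hasDerivAt_id r).div hden2 (by positivity)
      refine this.congr_deriv ?_
      simp only [id_eq]
      field_simp
      ring
    have H := (((h1.const_mul ((1:ℝ) / (8 * b ^ 3))).add (h2.const_mul ((1:ℝ) / (8 * b ^ 2)))).sub
        (h3.const_mul ((1:ℝ) / 4))).const_mul ((b ^ 2 + 1) ^ 3)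
    refine H.congr_deriv ?_
    have h1r : 1 + (r / b) ^ 2 > 0 := by positivity
    field_simp
    ring
  have hT := ((((tend_arctan b hb).const_mul ((1:ℝ)/(8*b^3))).add
        ((tend_aux b hb 1 le_rfl).const_mul ((1:ℝ)/(8*b^2)))).sub
      (((tend_aux b hb 2 one_le_two).const_mul ((1:ℝ)/4)))).const_mul ((b^2+1)^3)
  simp only [pow_one] at hT
  rw [integral_Ici_eq_integral_Ioi,
    integral_Ioi_of_hasDerivAt_of_nonneg' (fun r _ => key r) (fun r _ => by positivity) hT, hF₂]
  norm_num
noncomputable def Gpol (u p : ℝ) : ℝ := ((-81:ℝ)/16) * p^5 + (8) * u * p^4 + ((-351:ℝ)/16) * u^2 * p^5 + ((51:ℝ)/2) * u^3 * p^4 + ((512:ℝ)/27) * u^4 * p^3 + ((-297:ℝ)/8) * u^4 * p^5 + ((273:ℝ)/16) * u^5 * p^4 + ((664:ℝ)/9) * u^6 * p^3 + ((-243:ℝ)/8) * u^6 * p^5 + ((1024:ℝ)/81) * u^7 * p^2 + (-29) * u^7 * p^4 + ((904:ℝ)/9) * u^8 * p^3 + ((-189:ℝ)/16) * u^8 * p^5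 + ((1408:ℝ)/27) * u^9 * p^2 + ((-417:ℝ)/8) * u^9 * p^4 + ((9317:ℝ)/216) * u^10 * p^3 + ((-27:ℝ)/16) * u^10 * p^5 + ((2176:ℝ)/27) * u^11 * p^2 + ((-57:ℝ)/2) * u^11 * p^4 + ((-1381:ℝ)/72) * u^12 * p^3 + ((4352:ℝ)/81) * u^13 * p^2 + ((-79:ℝ)/16) * u^13 * p^4 + ((-1627:ℝ)/72) * u^14 * p^3 + ((256:ℝ)/27) * u^15 * p^2 + ((-1061:ℝ)/216) * u^16 * p^3 + ((-128:ℝ)/27) * u^17 * p^2 + ((-128:ℝ)/81) * u^19 * p^2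
noncomputable def Hpol (u p s : ℝ) : ℝ := ((-27:ℝ)/8) * p^3 * s^2 + ((81:ℝ)/16) * p^4 * s + ((-27:ℝ)/16) * p^5 + ((-81:ℝ)/4) * u^2 * p^3 * s^2 + ((243:ℝ)/8) * u^2 * p^4 * s + ((-81:ℝ)/8) * u^2 * p^5 + ((9:ℝ)/2) * u^3 * p^4 + ((-405:ℝ)/8) * u^4 * p^3 * s^2 + ((1215:ℝ)/16) * u^4 * p^4 * s + ((-405:ℝ)/16) * u^4 * p^5 + ((-27:ℝ)/8) * u^5 * p^3 * s + ((243:ℝ)/8) * u^5 * p^4 + (8) * u^6 * p^3 + ((-135:ℝ)/2) * u^6 * p^3 * s^2 + ((405:ℝ)/4) * u^6 * p^4 * s + ((-135:ℝ)/4) * u^6 * p^5 + ((-81:ℝ)/8) * u^7 * p^3 * s + ((621:ℝ)/8) * u^7 * p^4 + (48) * u^8 * p^3 + ((-405:ℝ)/8) * u^8 * p^3 * s^2 + ((1215:ℝ)/16) * u^8 * p^4 * s + ((-405:ℝ)/16) * u^8 * p^5 + ((128:ℝ)/27) * u^9 * p^2 + ((-27:ℝ)/4) * u^9 * p^3 *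 s + ((387:ℝ)/4) * u^9 * p^4 + ((951:ℝ)/8) * u^10 * p^3 + ((-81:ℝ)/4) * u^10 * p^3 * s^2 + ((243:ℝ)/8) * u^10 * p^4 * s + ((-81:ℝ)/8) * u^10 * p^5 + ((256:ℝ)/9) * u^11 * p^2 + ((27:ℝ)/4) * u^11 * p^3 * s + ((243:ℝ)/4) * u^11 * p^4 + (160) * u^12 * p^3 + ((-27:ℝ)/8) * u^12 * p^3 * s^2 + ((81:ℝ)/16) * u^12 * p^4 * s + ((-27:ℝ)/16) * u^12 * p^5 + ((640:ℝ)/9) * u^13 * p^2 + ((81:ℝ)/8) * u^13 * p^3 * s + ((135:ℝ)/8) * u^13 * p^4 + ((489:ℝ)/4) * u^14 * p^3 + ((2560:ℝ)/27) * u^15 * p^2 + ((27:ℝ)/8) * u^15 * p^3 * s + ((9:ℝ)/8) * u^15 * p^4 + (48) * u^16 * p^3 + ((640:ℝ)/9) * u^17 * p^2 + ((55:ℝ)/8) * u^18 * p^3 + ((256:ℝ)/9) * u^19 * p^2 + ((128:ℝ)/27) * u^21 * p^2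

lemma arctan_taylor_lb : ∀ u : ℝ, 0 ≤ u → 0 ≤ Real.arctan u - (u - u ^ 3 / 3) := by
  have hmono : Monotone (fun u : ℝ => Real.arctan u - (u - u ^ 3 / 3)) := by
    have hd : ∀ x : ℝ, HasDerivAt (fun u : ℝ => Real.arctan u - (u - u ^ 3 / 3))
        (1 / (1 + x ^ 2) - (1 - 3 * x ^ 2 / 3)) x := by
      intro x
      exact ((Real.hasDerivAt_arctan x).sub ((hasDerivAt_id x).sub
        ((hasDerivAt_pow 3 x).div_const 3))).congr_deriv (by norm_num)
    apply monotone_of_deriv_nonneg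
    · exact fun x => ((hd x).differentiableAt)
    · intro x
      rw [(hd x).deriv]
      have h1 : (0:ℝ) < 1 + x ^ 2 := by positivity
      rw [div_sub' h1.ne']
      apply div_nonneg _ h1.le
      nlinarith [sq_nonneg x, sq_nonneg (x^2)]
  intro u hu
  have := hmono hu
  simpa using this

lemma arctan_taylor_ub : ∀ u : ℝ, 0 ≤ u → Real.arctan u - (u - u ^ 3 / 3) ≤ u ^ 5 / 5 := by
  have hmono : Monotone (fun u : ℝ => u ^ 5 / 5 - (Real.arctan u - (u - u ^ 3 / 3))) := by
    have hd : ∀ x : ℝ, HasDerivAt (fun u : ℝ => u ^ 5 / 5 - (Real.arctan u - (u - u ^ 3 / 3)))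
        (5 * x ^ 4 / 5 - (1 / (1 + x ^ 2) - (1 - 3 * x ^ 2 / 3))) x := by
      intro x
      exact ((hasDerivAt_pow 5 x).div_const 5).sub
        ((Real.hasDerivAt_arctan x).sub ((hasDerivAt_id x).sub
          ((hasDerivAt_pow 3 x).div_const 3))) |>.congr_deriv (by norm_num)
    apply monotone_of_deriv_nonneg
    · exact fun x => ((hd x).differentiableAt)
    · intro x
      rw [(hd x).deriv]
      have h1 : (0:ℝ) < 1 + x ^ 2 := by positivity
      have : 1 / (1 + x ^ 2) - (1 - 3 * x ^ 2 / 3) ≤ x ^ 4 := by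
        rw [div_sub' h1.ne', div_le_iff₀ h1]
        nlinarith [sq_nonneg x, sq_nonneg (x^2)]
      nlinarith
  intro u hu
  have := hmono hu
  simp only [Real.arctan_zero] at this
  nlinarith [this]

noncomputable def Af (b : ℝ) : ℝ :=
  π / 2 * ((5 * b + 3 * b ^ 3 + 3 * (1 + b ^ 2) ^ 2 * Real.arctan b) / (b * (1 + b ^ 2)))
noncomputable def Bf (b : ℝ) : ℝ :=
  π / 2 * ((-b + b ^ 5 + (1 + b ^ 2) ^ 3 * Real.arctan b) / b ^ 3)
noncomputable def Xf (b : ℝ) : ℝ :=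
  3 * (π / 2) ^ ((4:ℝ)/3) + (2 ^ ((8:ℝ)/3) * π ^ ((1:ℝ)/3) / 3) * b ^ (-3:ℤ)

lemma rpow_cube (x : ℝ) (hx : 0 ≤ x) (q : ℝ) : (x ^ q) ^ (3:ℕ) = x ^ (3 * q) := by
  rw [← Real.rpow_natCast (x ^ q) 3, ← Real.rpow_mul hx]
  ring_nf

lemma hL3 : (3 * (π / 2) ^ ((4:ℝ)/3)) ^ 3 = 27 * π ^ 4 / 16 := by
  rw [mul_pow, rpow_cube _ (by positivity), show (3:ℝ) * ((4:ℝ)/3) = ((4:ℕ):ℝ) by norm_num,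
    Real.rpow_natCast, div_pow]
  norm_num
  ring

lemma hc3 : (2 ^ ((8:ℝ)/3) * π ^ ((1:ℝ)/3) / 3) ^ 3 = 256 * π / 27 := by
  rw [div_pow, mul_pow, rpow_cube _ (by norm_num), rpow_cube _ pi_pos.le,
    show (3:ℝ) * ((8:ℝ)/3) = ((8:ℕ):ℝ) by norm_num,
    show (3:ℝ) * ((1:ℝ)/3) = ((1:ℕ):ℝ) by norm_num, Real.rpow_natCast, Real.rpow_natCast]
  norm_num

lemma hL2c : (3 * (π / 2) ^ ((4:ℝ)/3)) ^ 2 * (2 ^ ((8:ℝ)/3) * π ^ ((1:ℝ)/3) / 3) = 3 * π ^ 3 := by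
  have h1 : ((π / 2) ^ ((4:ℝ)/3)) ^ (2:ℕ) = (π/2) ^ ((8:ℝ)/3) := by
    rw [← Real.rpow_natCast ((π/2) ^ ((4:ℝ)/3)) 2, ← Real.rpow_mul (by positivity)]
    norm_num
  have h2 : ((π:ℝ)/2) ^ ((8:ℝ)/3) = π ^ ((8:ℝ)/3) / 2 ^ ((8:ℝ)/3) :=
    Real.div_rpow pi_pos.le (by norm_num : (0:ℝ) ≤ 2) _
  have h3 : (π:ℝ) ^ ((8:ℝ)/3) * π ^ ((1:ℝ)/3) = π ^ 3 := by
    rw [← Real.rpow_add pi_pos, show (8:ℝ)/3 + (1:ℝ)/3 = ((3:ℕ):ℝ) by norm_num,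
      Real.rpow_natCast]
  have h4 : (0:ℝ) < 2 ^ ((8:ℝ)/3) := Real.rpow_pos_of_pos (by norm_num) _
  rw [mul_pow, h1, h2]
  field_simp
  linear_combination h3
lemma hLc2 : (3 * (π / 2) ^ ((4:ℝ)/3)) * (2 ^ ((8:ℝ)/3) * π ^ ((1:ℝ)/3) / 3) ^ 2
    = 16 * π ^ 2 / 3 := by
  have h1 : ((2:ℝ) ^ ((8:ℝ)/3)) ^ (2:ℕ) = 2 ^ ((16:ℝ)/3) := by
    rw [← Real.rpow_natCast ((2:ℝ) ^ ((8:ℝ)/3)) 2, ← Real.rpow_mul (by norm_num)]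
    norm_num
  have h1' : ((π:ℝ) ^ ((1:ℝ)/3)) ^ (2:ℕ) = π ^ ((2:ℝ)/3) := by
    rw [← Real.rpow_natCast ((π:ℝ) ^ ((1:ℝ)/3)) 2, ← Real.rpow_mul pi_pos.le]
    norm_num
  have h2 : ((π:ℝ)/2) ^ ((4:ℝ)/3) = π ^ ((4:ℝ)/3) / 2 ^ ((4:ℝ)/3) :=
    Real.div_rpow pi_pos.le (by norm_num : (0:ℝ) ≤ 2) _
  have h3 : (π:ℝ) ^ ((4:ℝ)/3) * π ^ ((2:ℝ)/3) = π ^ 2 := by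
    rw [← Real.rpow_add pi_pos, show (4:ℝ)/3 + (2:ℝ)/3 = ((2:ℕ):ℝ) by norm_num,
      Real.rpow_natCast]
  have h4 : ((2:ℝ)) ^ ((16:ℝ)/3) = 16 * 2 ^ ((4:ℝ)/3) := by
    rw [show (16:ℝ)/3 = ((4:ℕ):ℝ) + (4:ℝ)/3 by norm_num, Real.rpow_add (by norm_num),
      Real.rpow_natCast]
    norm_num
  have h5 : (0:ℝ) < 2 ^ ((4:ℝ)/3) := Real.rpow_pos_of_pos (by norm_num) _
  rw [div_pow, mul_pow, h1, h1', h2]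
  field_simp
  linear_combination (2:ℝ)^((16:ℝ)/3) * h3 + π^2 * h4

lemma Xf_cube (b : ℝ) (hb : b ≠ 0) :
    Xf b ^ 3 = 27 * π ^ 4 / 16 + 9 * π ^ 3 * (b⁻¹) ^ 3 + 16 * π ^ 2 * (b⁻¹) ^ 6
      + 256 * π / 27 * (b⁻¹) ^ 9 := by
  have hz : (b:ℝ) ^ (-3:ℤ) = (b⁻¹) ^ 3 := by
    rw [zpow_neg, show ((3:ℤ)) = ((3:ℕ):ℤ) from rfl, zpow_natCast, inv_pow]
  rw [Xf, hz]
  linear_combination hL3 + 3 * (b⁻¹)^3 * hL2c + 3 * ((b⁻¹)^3)^2 * hLc2 + ((b⁻¹)^3)^3 * hc3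

set_option maxHeartbeats 4000000 in
lemma key_ident (b : ℝ) (hb : 1 ≤ b) :
    (b⁻¹ * Gpol b⁻¹ π + ((Real.arctan b⁻¹ - b⁻¹ + b⁻¹ ^ 3 / 3) / b⁻¹ ^ 4) *
        Hpol b⁻¹ π (Real.arctan b⁻¹ - b⁻¹ + b⁻¹ ^ 3 / 3)) / (1 + b⁻¹ ^ 2) ^ 3
      = b * (Af b ^ 3 - Xf b ^ 3 * Bf b) := by
  have hb0 : (0:ℝ) < b := by linarith
  have hu0 : (0:ℝ) < b⁻¹ := by positivity
  set u := b⁻¹ with hu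
  set S := Real.arctan u - u + u ^ 3 / 3 with hS
  have harc : Real.arctan b = π / 2 - (u - u ^ 3 / 3 + S) := by
    have h := Real.arctan_inv_of_pos hb0
    rw [← hu] at h
    rw [hS]
    linarith
  have hXc := Xf_cube b hb0.ne'
  have hbu : b = u⁻¹ := by rw [hu, inv_inv]
  simp only [Af, Bf, Gpol, Hpol]
  rw [harc, hXc, hbu]
  have h1 : (0:ℝ) < 1 + u ^ 2 := by positivity
  field_simp
  ring

lemma eAu (b : ℝ) (hb : 1 ≤ b) : Af b * b⁻¹
    = π/2 * ((3*b⁻¹ + 5*b⁻¹^3 + 3*(1+b⁻¹^2)^2 * Real.arctan b) / (1 + b⁻¹^2)) := by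
  have hb0 : (0:ℝ) < b := by linarith
  rw [Af]
  have h2 : (0:ℝ) < 1 + b^2 := by positivity
  field_simp
  ring

lemma eBu (b : ℝ) (hb : 1 ≤ b) : Bf b * b⁻¹^3
    = π/2 * (b⁻¹ - b⁻¹^5 + (1+b⁻¹^2)^3 * Real.arctan b) := by
  have hb0 : (0:ℝ) < b := by linarith
  rw [Bf]
  field_simp
  ring

lemma hApos (b : ℝ) (hb : 1 ≤ b) : 0 < Af b := by
  have hb0 : (0:ℝ) < b := by linarith
  have hat : 0 < Real.arctan b := by
    rw [← Real.arctan_zero]; exact Real.arctan_strictMono hb0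
  rw [Af]
  have h1 : 0 < (1+b^2)^2 := by positivity
  apply mul_pos (by positivity)
  apply div_pos _ (by positivity)
  nlinarith [mul_pos h1 hat]

lemma hBpos (b : ℝ) (hb : 1 ≤ b) : 0 < Bf b := by
  have hb0 : (0:ℝ) < b := by linarith
  have hat : 0 < Real.arctan b := by
    rw [← Real.arctan_zero]; exact Real.arctan_strictMono hb0
  rw [Bf]
  have h1 : 0 < (1+b^2)^3 := by positivity
  apply mul_pos (by positivity)
  apply div_pos _ (by positivity)
  nlinarith [mul_pos h1 hat, pow_le_pow_right₀ hb (show (1:ℕ) ≤ 5 by norm_num)]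

lemma hXpos (b : ℝ) (hb : 1 ≤ b) : 0 < Xf b := by
  have hb0 : (0:ℝ) < b := by linarith
  have h1 : (0:ℝ) < b ^ (-3:ℤ) := zpow_pos hb0 _
  rw [Xf]
  have h2 : (0:ℝ) < 3 * (π/2) ^ ((4:ℝ)/3) := by positivity
  have h3 : (0:ℝ) < 2 ^ ((8:ℝ)/3) * π ^ ((1:ℝ)/3) / 3 := by positivity
  positivity

set_option maxHeartbeats 4000000 in
lemma asymp :
    (fun b : ℝ => Af b / (Bf b) ^ ((1:ℝ)/3) - Xf b) =O[atTop] fun b : ℝ => b ^ (-4:ℤ) := by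
  have hu : Tendsto (fun b : ℝ => b⁻¹) atTop (𝓝 (0:ℝ)) := tendsto_inv_atTop_zero
  have hT : Tendsto Real.arctan atTop (𝓝 (π/2)) :=
    tendsto_nhds_of_tendsto_nhdsWithin Real.tendsto_arctan_atTop
  -- A * u tendsto
  have hAu : Tendsto (fun b : ℝ => Af b * b⁻¹) atTop (𝓝 (3*π^2/4)) := by
    have base : Tendsto (fun b : ℝ =>
        π/2 * ((3*b⁻¹ + 5*b⁻¹^3 + 3*(1+b⁻¹^2)^2 * Real.arctan b) / (1 + b⁻¹^2))) atTop
        (𝓝 (π/2 * ((3*0 + 5*0^3 + 3*(1+0^2)^2 * (π/2)) / (1 + 0^2)))) := by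
      apply Tendsto.const_mul
      exact Tendsto.div (((hu.const_mul 3).add ((hu.pow 3).const_mul 5)).add
        (((((hu.pow 2).const_add 1).pow 2).const_mul 3).mul hT))
        ((hu.pow 2).const_add 1) (by norm_num)
    have hval : π/2 * ((3*(0:ℝ) + 5*0^3 + 3*(1+0^2)^2 * (π/2)) / (1 + 0^2)) = 3*π^2/4 := by
      norm_num
      ring
    rw [hval] at base
    apply base.congr'
    filter_upwards [eventually_ge_atTop (1:ℝ)] with b hb
    exact (eAu b hb).symm
  -- B * u^3 tendsto
  have hBu3 : Tendsto (fun b : ℝ => Bf b * b⁻¹^3) atTop (𝓝 (π^2/4)) := by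
    have base : Tendsto (fun b : ℝ =>
        π/2 * (b⁻¹ - b⁻¹^5 + (1+b⁻¹^2)^3 * Real.arctan b)) atTop
        (𝓝 (π/2 * (0 - 0^5 + (1+0^2)^3 * (π/2)))) := by
      apply Tendsto.const_mul
      exact (hu.sub (hu.pow 5)).add ((((hu.pow 2).const_add 1).pow 3).mul hT)
    have hval : π/2 * ((0:ℝ) - 0^5 + (1+0^2)^3 * (π/2)) = π^2/4 := by
      norm_num
      ring
    rw [hval] at base
    apply base.congr'
    filter_upwards [eventually_ge_atTop (1:ℝ)] with b hb
    exact (eBu b hb).symm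
  -- y * u tendsto
  have hyu : Tendsto (fun b : ℝ => (Bf b) ^ ((1:ℝ)/3) * b⁻¹) atTop
      (𝓝 ((π^2/4) ^ ((1:ℝ)/3))) := by
    have hcont : ContinuousAt (fun x : ℝ => x ^ ((1:ℝ)/3)) (π^2/4) :=
      Real.continuousAt_rpow_const _ _ (Or.inl (by positivity))
    have base := hcont.tendsto.comp hBu3
    apply base.congr'
    filter_upwards [eventually_ge_atTop (1:ℝ)] with b hb
    have hb0 : (0:ℝ) < b := by linarith
    have hB := hBpos b hb
    show ((Bf b * b⁻¹^3) ^ ((1:ℝ)/3)) = Bf b ^ ((1:ℝ)/3) * b⁻¹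
    rw [Real.mul_rpow hB.le (by positivity)]
    congr 1
    rw [← Real.rpow_natCast (b⁻¹) 3, ← Real.rpow_mul (by positivity)]
    norm_num
  -- X tendsto
  have hX : Tendsto Xf atTop (𝓝 (3 * (π/2) ^ ((4:ℝ)/3))) := by
    have h0 : Tendsto (fun b : ℝ => b ^ (-3:ℤ)) atTop (𝓝 0) :=
      tendsto_zpow_atTop_zero (by norm_num)
    have h1 := (h0.const_mul (2 ^ ((8:ℝ)/3) * π ^ ((1:ℝ)/3) / 3)).const_add
      (3 * (π/2) ^ ((4:ℝ)/3))
    simp only [mul_zero, add_zero] at h1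
    exact h1
  -- S tendsto
  have hS : Tendsto (fun b : ℝ => Real.arctan b⁻¹ - b⁻¹ + b⁻¹^3/3) atTop (𝓝 0) := by
    have := ((Real.continuous_arctan.tendsto 0).comp hu).sub hu |>.add ((hu.pow 3).div_const 3)
    simpa using this
  -- S / u^4 tendsto 0
  have hSu4 : Tendsto (fun b : ℝ => (Real.arctan b⁻¹ - b⁻¹ + b⁻¹^3/3) / b⁻¹^4) atTop (𝓝 0) := by
    have hub : Tendsto (fun b : ℝ => b⁻¹/5) atTop (𝓝 0) := by
      simpa using hu.div_const 5
    refine tendsto_of_tendsto_of_tendsto_of_le_of_le' tendsto_const_nhds hub ?_ ?_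
    · filter_upwards [eventually_ge_atTop (1:ℝ)] with b hb
      have hb0 : (0:ℝ) < b := by linarith
      have := arctan_taylor_lb b⁻¹ (by positivity)
      apply div_nonneg _ (by positivity)
      linarith
    · filter_upwards [eventually_ge_atTop (1:ℝ)] with b hb
      have hb0 : (0:ℝ) < b := by linarith
      have hup : (0:ℝ) < b⁻¹ := by positivity
      have h2 := arctan_taylor_ub b⁻¹ hup.le
      rw [div_le_iff₀ (by positivity)]
      have h3 : b⁻¹/5 * b⁻¹^4 = b⁻¹^5/5 := by ring
      linarith
  -- G tendsto
  have hGc : Continuous (fun u : ℝ => Gpol u π) := by unfold Gpol; fun_prop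
  have hG : Tendsto (fun b : ℝ => Gpol b⁻¹ π) atTop (𝓝 (Gpol 0 π)) :=
    (hGc.tendsto 0).comp hu
  -- H tendsto
  have hHc : Continuous (fun q : ℝ × ℝ => Hpol q.1 π q.2) := by unfold Hpol; fun_prop
  have hH : Tendsto (fun b : ℝ => Hpol b⁻¹ π (Real.arctan b⁻¹ - b⁻¹ + b⁻¹^3/3)) atTop
      (𝓝 (Hpol 0 π 0)) := by
    have := (hHc.tendsto (0, 0)).comp (hu.prodMk_nhds hS)
    exact this
  -- NUM tendsto 0
  have hNUM : Tendsto (fun b : ℝ =>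
      (b⁻¹ * Gpol b⁻¹ π + ((Real.arctan b⁻¹ - b⁻¹ + b⁻¹ ^ 3 / 3) / b⁻¹ ^ 4) *
        Hpol b⁻¹ π (Real.arctan b⁻¹ - b⁻¹ + b⁻¹ ^ 3 / 3)) / (1 + b⁻¹ ^ 2) ^ 3) atTop
      (𝓝 0) := by
    have := Tendsto.div ((hu.mul hG).add (hSu4.mul hH))
      (((hu.pow 2).const_add 1).pow 3) (by norm_num)
    simpa [Pi.div_def] using this
  -- DEN tendsto
  set α := ((π^2/4:ℝ)) ^ ((1:ℝ)/3) with hα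
  set Λ := (3 * (π/2) ^ ((4:ℝ)/3) : ℝ) with hΛ
  have hDEN : Tendsto (fun b : ℝ =>
      ((Bf b) ^ ((1:ℝ)/3) * b⁻¹) * ((Af b * b⁻¹)^2 + (Af b * b⁻¹) * Xf b * ((Bf b) ^ ((1:ℝ)/3) * b⁻¹)
        + (Xf b)^2 * ((Bf b) ^ ((1:ℝ)/3) * b⁻¹)^2)) atTop
      (𝓝 (α * ((3*π^2/4)^2 + (3*π^2/4) * Λ * α + Λ^2 * α^2))) :=
    hyu.mul (((hAu.pow 2).add ((hAu.mul hX).mul hyu)).add ((hX.pow 2).mul (hyu.pow 2)))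
  have hκ : (α * ((3*π^2/4)^2 + (3*π^2/4) * Λ * α + Λ^2 * α^2)) ≠ 0 := by
    have hα0 : 0 < α := Real.rpow_pos_of_pos (by positivity) _
    have hΛ0 : (0:ℝ) < Λ := by rw [hΛ]; positivity
    positivity
  -- eventual identity
  have hqeq : ∀ᶠ b in atTop, (Af b / (Bf b) ^ ((1:ℝ)/3) - Xf b) * b^4 =
      ((b⁻¹ * Gpol b⁻¹ π + ((Real.arctan b⁻¹ - b⁻¹ + b⁻¹ ^ 3 / 3) / b⁻¹ ^ 4) *
        Hpol b⁻¹ π (Real.arctan b⁻¹ - b⁻¹ + b⁻¹ ^ 3 / 3)) / (1 + b⁻¹ ^ 2) ^ 3) /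
      (((Bf b) ^ ((1:ℝ)/3) * b⁻¹) * ((Af b * b⁻¹)^2 + (Af b * b⁻¹) * Xf b * ((Bf b) ^ ((1:ℝ)/3) * b⁻¹)
        + (Xf b)^2 * ((Bf b) ^ ((1:ℝ)/3) * b⁻¹)^2)) := by
    filter_upwards [eventually_ge_atTop (1:ℝ)] with b hb
    have hb0 : (0:ℝ) < b := by linarith
    have hA := hApos b hb
    have hB := hBpos b hb
    have hXp := hXpos b hb
    set y := (Bf b) ^ ((1:ℝ)/3) with hy
    have hy0 : 0 < y := Real.rpow_pos_of_pos hB _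
    have hy3 : y ^ 3 = Bf b := by
      rw [hy, rpow_cube _ hB.le]
      norm_num
    have hquad : 0 < (Af b)^2 + Af b * Xf b * y + (Xf b)^2 * y^2 := by positivity
    have hQ : Af b / y - Xf b
        = (Af b^3 - Xf b^3 * Bf b) / (y * ((Af b)^2 + Af b * Xf b * y + (Xf b)^2 * y^2)) := by
      rw [← hy3]
      field_simp
      ring
    rw [hQ, key_ident b hb]
    field_simp
  -- conclude
  have H : Tendsto (fun b : ℝ => (Af b / (Bf b) ^ ((1:ℝ)/3) - Xf b) * b^4) atTop (𝓝 0) := by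
    have := (hNUM.div hDEN hκ).congr' (Filter.EventuallyEq.symm hqeq)
    simpa using this
  have hO1 := H.isBigO_one ℝ
  have hO2 := hO1.mul (isBigO_refl (fun b : ℝ => b ^ (-4:ℤ)) atTop)
  refine hO2.congr' ?_ ?_
  · filter_upwards [eventually_ge_atTop (1:ℝ)] with b hb
    have hb0 : (0:ℝ) < b := by linarith
    show (Af b / (Bf b) ^ ((1:ℝ)/3) - Xf b) * b^4 * b ^ (-4:ℤ) = _
    rw [mul_assoc, ← zpow_natCast b 4, ← zpow_add₀ hb0.ne']
    norm_num
  · filter_upwards [] with b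
    simp

set_option maxHeartbeats 1000000 in
lemma intA (b : ℝ) (hb : 1 ≤ b) :
    (∫ x in {x : EuclideanSpace ℝ (Fin 3) | 1 ≤ ‖x‖},
        ‖gradient (fun y : EuclideanSpace ℝ (Fin 3) =>
          Real.sqrt ((b ^ 2 + 1) / (b ^ 2 + ‖y‖ ^ 2))) x‖ ^ 2) = Af b := by
  have hb0 : (0:ℝ) < b := by linarith
  rw [radial3 _ (fun r => (b ^ 2 + 1) * r ^ 2 / (b ^ 2 + r ^ 2) ^ 3)
    (fun x hx => grad_norm_sq b hb x), ftcA b hb]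
  have harc : Real.arctan (1/b) = π/2 - Real.arctan b := by
    rw [one_div, Real.arctan_inv_of_pos hb0]
  rw [harc, Af]
  have h2 : (0:ℝ) < 1 + b^2 := by positivity
  field_simp
  ring

set_option maxHeartbeats 1000000 in
lemma intB (b : ℝ) (hb : 1 ≤ b) :
    (∫ x in {x : EuclideanSpace ℝ (Fin 3) | 1 ≤ ‖x‖},
        (Real.sqrt ((b ^ 2 + 1) / (b ^ 2 + ‖x‖ ^ 2))) ^ 6) = Bf b := by
  have hb0 : (0:ℝ) < b := by linarith
  rw [radial3 _ (fun r => ((b ^ 2 + 1) / (b ^ 2 + r ^ 2)) ^ 3) (fun x hx => by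
    have hz : (0:ℝ) ≤ (b ^ 2 + 1) / (b ^ 2 + ‖x‖ ^ 2) := by positivity
    rw [show (6:ℕ) = 2 * 3 from rfl, pow_mul, Real.sq_sqrt hz]), ftcB b hb]
  have harc : Real.arctan (1/b) = π/2 - Real.arctan b := by
    rw [one_div, Real.arctan_inv_of_pos hb0]
  rw [harc, Bf]
  have h2 : (0:ℝ) < 1 + b^2 := by positivity
  field_simp
  ring

/-- As β → ∞, the Sobolev quotient of `s_β` on ℝ³ ∖ B₁ equals
`Λ + (2^{8/3} π^{1/3}/3) β⁻³ + O(β⁻⁴)` where `Λ = 3(π/2)^{4/3}`. -/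
theorem stmt2 :
    (fun β : ℝ =>
      (∫ x in {x : EuclideanSpace ℝ (Fin 3) | 1 ≤ ‖x‖},
          ‖gradient (fun y : EuclideanSpace ℝ (Fin 3) =>
            Real.sqrt ((β ^ 2 + 1) / (β ^ 2 + ‖y‖ ^ 2))) x‖ ^ 2) /
        (∫ x in {x : EuclideanSpace ℝ (Fin 3) | 1 ≤ ‖x‖},
          (Real.sqrt ((β ^ 2 + 1) / (β ^ 2 + ‖x‖ ^ 2))) ^ 6) ^ ((1 : ℝ) / 3)
      - (3 * (π / 2) ^ ((4 : ℝ) / 3)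
          + (2 ^ ((8 : ℝ) / 3) * π ^ ((1 : ℝ) / 3) / 3) * β ^ (-3 : ℤ)))
      =O[atTop] fun β : ℝ => β ^ (-4 : ℤ) := by
  refine asymp.congr' ?_ EventuallyEq.rfl
  filter_upwards [eventually_ge_atTop (1:ℝ)] with b hb
  rw [intA b hb, intB b hb]
  rfl
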